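/- Let φ be a sequence of pivots applicable to a simple graph G, let S = sup(φ) be its support, and let x, y be distinct vertices of G. Then det((Gφ)[{x,y}]) = det(G[S ⊕ {x,y}]) over GF(2); consequently {x,y} is an edge of Gφ if and only if det(G[S ⊕ {x,y}]) = 1. -/

import Mathlib

set_option linter.unusedSectionVars false

variable {V : Type*} [Fintype V] [DecidableEq V]

/-- Local complementation at a vertex `w`: complement the edges within `N_G(w)`. -/
def SimpleGraph.localComp (G : SimpleGraph V) (w : V) : SimpleGraph V where
  Adj x y := x ≠ y ∧ Xor' (G.Adj x y) (G.Adj x w ∧ G.Adj y w)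
  symm := by
    constructor
    intro x y ⟨hne, hx⟩
    refine ⟨hne.symm, ?_⟩
    have h1 := G.adj_comm x y
    unfold Xor' at hx ⊢
    unfold Xor at hx ⊢
    tauto
  loopless := by constructor; intro x ⟨h, _⟩; exact h rfl

/-- `x ∼_G y` : `x = y` or `{x,y}` is an edge of `G`. -/
def SimpleGraph.nbr (G : SimpleGraph V) (x y : V) : Prop := x = y ∨ G.Adj x y

theorem SimpleGraph.nbr_comm (G : SimpleGraph V) (x y : V) : G.nbr x y ↔ G.nbr y x :=
  or_congr eq_comm (G.adj_comm x y)

private theorem xor_swap_right (a b c : Prop) : Xor' (Xor' a b) c ↔ Xor' (Xor' a c) b := by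
  unfold Xor'; unfold Xor; tauto

/-- The pivot `G[uv]` of `G` on an edge `{u,v}`, characterized by
`x ∼_{G[uv]} y ⟺ (x ∼_G y) XOR ((x ∼_G u) ∧ (y ∼_G v)) XOR ((x ∼_G v) ∧ (y ∼_G u))`. -/
def SimpleGraph.pivot (G : SimpleGraph V) (u v : V) : SimpleGraph V where
  Adj x y := x ≠ y ∧
    Xor' (Xor' (G.nbr x y) (G.nbr x u ∧ G.nbr y v)) (G.nbr x v ∧ G.nbr y u)
  symm := by
    constructor
    intro x y ⟨hne, hx⟩
    refine ⟨hne.symm, ?_⟩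
    show Xor' (Xor' (G.nbr y x) (G.nbr y u ∧ G.nbr x v)) (G.nbr y v ∧ G.nbr x u)
    rw [G.nbr_comm y x, and_comm (a := G.nbr y u) (b := G.nbr x v),
      and_comm (a := G.nbr y v) (b := G.nbr x u)]
    exact (xor_swap_right _ _ _).mp hx
  loopless := by constructor; intro x ⟨h, _⟩; exact h rfl

/-- Determinant over GF(2) of the adjacency matrix of the subgraph of `G` induced by `S`. -/
noncomputable def gdet (G : SimpleGraph V) (S : Finset V) : ZMod 2 := by
  classical
  exact Matrix.det (Matrix.of fun i j : S => if G.Adj i j then (1 : ZMod 2) else 0)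

/-- Apply a sequence of pivots (left to right). -/
def applyPivots (G : SimpleGraph V) : List (V × V) → SimpleGraph V
  | [] => G
  | p :: φ => applyPivots (G.pivot p.1 p.2) φ

/-- A sequence of pivots is applicable when each pair is an edge of the graph
obtained by applying all preceding pivots. -/
def PivotsApplicable (G : SimpleGraph V) : List (V × V) → Prop
  | [] => True
  | p :: φ => G.Adj p.1 p.2 ∧ PivotsApplicable (G.pivot p.1 p.2) φ

/-- The support of a sequence of pivots: vertices occurring an odd number of times. -/
def pivotSupport (φ : List (V × V)) : Finset V :=
  Finset.univ.filter fun x => Odd ((φ.flatMap fun p => [p.1, p.2]).count x)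

/-- A sequence of pivots is reduced if its pivot vertices are pairwise distinct. -/
def ReducedSeq (φ : List (V × V)) : Prop := (φ.flatMap fun p => [p.1, p.2]).Nodup

/-- The number of perfect matchings of the subgraph of `G` induced by `S`:
sets of edges of `G` inside `S` such that every vertex of `S` lies in exactly one of them. -/
noncomputable def pmCount (G : SimpleGraph V) (S : Finset V) : ℕ := by
  classical
  exact (Finset.univ.filter fun P : Finset (Sym2 V) =>
    (∀ e ∈ P, e ∈ G.edgeSet ∧ ∀ v ∈ e, v ∈ S) ∧
    ∀ v ∈ S, ∃! e, e ∈ P ∧ v ∈ e).card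

section Aux

open Classical in
/-- Adjacency matrix over GF(2). -/
private noncomputable def adjM (G : SimpleGraph V) : Matrix V V (ZMod 2) :=
  Matrix.of fun i j => if G.Adj i j then 1 else 0

open Classical in
private noncomputable def colSel (M : Matrix V V (ZMod 2)) (S : Finset V) :
    Matrix V V (ZMod 2) :=
  Matrix.of fun i j => if j ∈ S then M i j else if i = j then 1 else 0

private lemma gdet_eq (G : SimpleGraph V) (S : Finset V) :
    gdet G S =
      Matrix.det ((adjM G).submatrix (fun i : S => (i : V)) (fun i : S => (i : V))) := rfl

open Classical in
private lemma det_colSel (M : Matrix V V (ZMod 2)) (S : Finset V) :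
    (colSel M S).det =
      Matrix.det (M.submatrix (fun i : S => (i : V)) (fun i : S => (i : V))) := by
  classical
  let e : {x // x ∈ S} ⊕ {x // ¬ x ∈ S} ≃ V := Equiv.sumCompl (· ∈ S)
  rw [← Matrix.det_submatrix_equiv_self e]
  have hblock : (colSel M S).submatrix e e =
      Matrix.fromBlocks (M.submatrix (fun i : S => (i : V)) (fun i : S => (i : V))) 0
        (M.submatrix (fun i : {x // ¬ x ∈ S} => (i : V)) (fun i : S => (i : V))) 1 := by
    ext i j
    cases i with
    | inl i =>
      cases j with
      | inl j => simp [colSel, e, j.2]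
      | inr j =>
        have : (i : V) ≠ (j : V) := fun hh => j.2 (hh ▸ i.2)
        simp [colSel, e, j.2, this]
    | inr i =>
      cases j with
      | inl j => simp [colSel, e, j.2]
      | inr j =>
        simp [colSel, e, j.2, Matrix.one_apply, Subtype.ext_iff]
  rw [hblock, Matrix.det_fromBlocks_zero₁₂, Matrix.det_one, mul_one]

private lemma gdet_colSel (G : SimpleGraph V) (S : Finset V) :
    gdet G S = (colSel (adjM G) S).det := by
  rw [gdet_eq, det_colSel]

open Classical in
private lemma gdet_pair (H : SimpleGraph V) (x y : V) (hxy : x ≠ y) :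
    gdet H {x, y} = if H.Adj x y then 1 else 0 := by
  classical
  have hx : x ∈ ({x, y} : Finset V) := by simp
  have hy : y ∈ ({x, y} : Finset V) := by simp
  let e : Fin 2 ≃ ({x, y} : Finset V) :=
    { toFun := fun i => if i = 0 then ⟨x, hx⟩ else ⟨y, hy⟩
      invFun := fun z => if (z : V) = x then 0 else 1
      left_inv := by
        intro i
        fin_cases i
        · simp
        · simp [Ne.symm hxy]
      right_inv := by
        rintro ⟨z, hz⟩
        simp only [Finset.mem_insert, Finset.mem_singleton] at hz
        rcases hz with rfl | rfl
        · simp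
        · simp [Ne.symm hxy] }
  rw [gdet_eq, ← Matrix.det_submatrix_equiv_self e, Matrix.det_fin_two]
  have e0 : ((e 0 : ({x, y} : Finset V)) : V) = x := rfl
  have e1 : ((e 1 : ({x, y} : Finset V)) : V) = y := rfl
  simp only [Matrix.submatrix_apply, adjM, Matrix.of_apply, e0, e1]
  by_cases hA : H.Adj x y
  · simp only [hA, hA.symm, H.irrefl, if_true, if_false]
    decide
  · have hA' : ¬ H.Adj y x := fun hh => hA hh.symm
    simp [hA, hA', H.irrefl]

open Classical in
private noncomputable def avec (G : SimpleGraph V) (w : V) : V → ZMod 2 :=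
  fun i => if G.nbr i w then 1 else 0

private lemma avec_eq (G : SimpleGraph V) (w i : V) :
    avec G w i = adjM G i w + (if i = w then 1 else 0) := by
  classical
  by_cases hiw : i = w
  · subst hiw
    simp [avec, adjM, SimpleGraph.nbr, G.irrefl]
  · by_cases hA : G.Adj i w
    · simp [avec, adjM, SimpleGraph.nbr, hiw, hA]
    · simp [avec, adjM, SimpleGraph.nbr, hiw, hA]

private lemma avec_self (G : SimpleGraph V) (w : V) : avec G w w = 1 := by
  simp [avec, SimpleGraph.nbr]

private lemma avec_adj (G : SimpleGraph V) {w z : V} (h : G.Adj z w) : avec G w z = 1 := by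
  simp [avec, SimpleGraph.nbr, h]

private lemma adjM_symm (G : SimpleGraph V) (i j : V) : adjM G i j = adjM G j i := by
  classical
  simp only [adjM, Matrix.of_apply, G.adj_comm]

private lemma adjM_pivot (G : SimpleGraph V) (u v i j : V) :
    adjM (G.pivot u v) i j =
      adjM G i j + avec G u i * avec G v j + avec G v i * avec G u j := by
  classical
  by_cases hij : i = j
  · subst hij
    have : ∀ p q : ZMod 2, p * q + q * p = 0 := by decide
    simp [adjM, (G.pivot u v).irrefl, G.irrefl, add_assoc, this]
  · have hnij : G.nbr i j ↔ G.Adj i j := or_iff_right hij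
    have hpiv : (G.pivot u v).Adj i j ↔
        Xor' (Xor' (G.nbr i j) (G.nbr i u ∧ G.nbr j v)) (G.nbr i v ∧ G.nbr j u) := by
      simp [SimpleGraph.pivot, hij]
    by_cases h1 : G.nbr i u <;> by_cases h2 : G.nbr j v <;>
      by_cases h3 : G.nbr i v <;> by_cases h4 : G.nbr j u <;>
      by_cases h5 : G.Adj i j <;>
      simp [adjM, avec, hpiv, hnij, h1, h2, h3, h4, h5, Xor'] <;> decide

private noncomputable def Kmat (G : SimpleGraph V) (u v : V) : Matrix V V (ZMod 2) :=
  Matrix.of fun i j =>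
    (if i = j then 1 else 0) + (if j = u then avec G u i else 0) +
      (if j = v then avec G v i else 0)

private lemma Kmat_mul_apply (G : SimpleGraph V) (u v : V) (M : Matrix V V (ZMod 2))
    (i y : V) :
    (Kmat G u v * M) i y = M i y + avec G u i * M u y + avec G v i * M v y := by
  classical
  simp only [Matrix.mul_apply, Kmat, Matrix.of_apply, add_mul, ite_mul, one_mul, zero_mul,
    Finset.sum_add_distrib]
  rw [Finset.sum_ite_eq, Finset.sum_ite_eq', Finset.sum_ite_eq']
  simp

private lemma adjM_avec (G : SimpleGraph V) (w i : V) :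
    adjM G i w = avec G w i + (if i = w then 1 else 0) := by
  classical
  rw [avec_eq]
  generalize adjM G i w = p
  generalize (if i = w then (1 : ZMod 2) else 0) = d
  revert p d
  decide

private lemma Kmat_eq_colSel (G : SimpleGraph V) {u v : V} (huv : u ≠ v) :
    Kmat G u v = colSel (adjM G) {u, v} := by
  classical
  ext i j
  simp only [Kmat, colSel, Matrix.of_apply, Finset.mem_insert, Finset.mem_singleton]
  by_cases hju : j = u
  · simp only [hju, eq_self_iff_true, if_true, true_or, if_neg huv]
    rw [adjM_avec]
    generalize avec G u i = p
    generalize (if i = u then (1 : ZMod 2) else 0) = d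
    revert p d
    decide
  · by_cases hjv : j = v
    · simp only [hjv, eq_self_iff_true, if_true, or_true, if_neg (Ne.symm huv)]
      rw [adjM_avec]
      generalize avec G v i = p
      generalize (if i = v then (1 : ZMod 2) else 0) = d
      revert p d
      decide
    · simp only [if_neg hju, if_neg hjv, if_neg (not_or.mpr ⟨hju, hjv⟩)]
      generalize (if i = j then (1 : ZMod 2) else 0) = d
      revert d
      decide

private lemma det_Kmat (G : SimpleGraph V) {u v : V} (h : G.Adj u v) :
    (Kmat G u v).det = 1 := by
  rw [Kmat_eq_colSel G h.ne, ← gdet_colSel, gdet_pair G u v h.ne, if_pos h]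

private lemma K_mul_colSel (G : SimpleGraph V) {u v : V} (h : G.Adj u v) (S : Finset V) :
    Kmat G u v * colSel (adjM (G.pivot u v)) S =
      colSel (adjM G) (symmDiff S {u, v}) := by
  classical
  have hne : u ≠ v := h.ne
  have hau : avec G u u = 1 := avec_self G u
  have hav : avec G u v = 1 := avec_adj G h.symm
  have hbu : avec G v u = 1 := avec_adj G h
  have hbv : avec G v v = 1 := avec_self G v
  have hB := adjM_pivot G u v
  have hBu : ∀ y, adjM (G.pivot u v) u y = (if y = u then 1 else 0) + avec G v y := by
    intro y
    rw [hB u y, hau, hbu, adjM_symm, adjM_avec]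
    generalize avec G u y = r
    generalize avec G v y = s
    generalize (if y = u then (1 : ZMod 2) else 0) = d
    revert r s d
    decide
  have hBv : ∀ y, adjM (G.pivot u v) v y = (if y = v then 1 else 0) + avec G u y := by
    intro y
    rw [hB v y, hav, hbv, adjM_symm, adjM_avec]
    generalize avec G u y = r
    generalize avec G v y = s
    generalize (if y = v then (1 : ZMod 2) else 0) = d
    revert r s d
    decide
  ext i y
  rw [Kmat_mul_apply]
  simp only [colSel, Matrix.of_apply]
  by_cases hyS : y ∈ S
  · by_cases hyu : y = u
    · simp only [hyu] at hyS ⊢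
      have hmem : ¬ u ∈ symmDiff S ({u, v} : Finset V) := by
        simp [Finset.mem_symmDiff, hyS]
      simp only [if_pos hyS, if_neg hmem]
      rw [hB i u, hBu u, hBv u]
      simp only [if_pos (rfl : u = u), if_neg hne]
      rw [adjM_avec, hau, hbu]
      generalize avec G u i = p
      generalize avec G v i = q
      generalize (if i = u then (1 : ZMod 2) else 0) = d
      revert p q d
      decide
    · by_cases hyv : y = v
      · simp only [hyv] at hyS ⊢
        have hmem : ¬ v ∈ symmDiff S ({u, v} : Finset V) := by
          simp [Finset.mem_symmDiff, hyS]
        simp only [if_pos hyS, if_neg hmem]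
        rw [hB i v, hBu v, hBv v]
        simp only [if_pos (rfl : v = v), if_neg (Ne.symm hne)]
        rw [adjM_avec, hav, hbv]
        generalize avec G u i = p
        generalize avec G v i = q
        generalize (if i = v then (1 : ZMod 2) else 0) = d
        revert p q d
        decide
      · have hmem : y ∈ symmDiff S ({u, v} : Finset V) := by
          simp [Finset.mem_symmDiff, hyS, hyu, hyv]
        simp only [if_pos hyS, if_pos hmem]
        rw [hB i y, hBu y, hBv y]
        simp only [if_neg hyu, if_neg hyv]
        generalize avec G u i = p
        generalize avec G v i = q
        generalize avec G u y = r
        generalize avec G v y = s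
        generalize adjM G i y = x
        revert p q r s x
        decide
  · by_cases hyu : y = u
    · simp only [hyu] at hyS ⊢
      have hmem : u ∈ symmDiff S ({u, v} : Finset V) := by
        simp [Finset.mem_symmDiff, hyS]
      simp only [if_neg hyS, if_pos hmem, if_pos (rfl : u = u),
        if_neg (Ne.symm hne : v ≠ u)]
      rw [adjM_avec]
      generalize avec G u i = p
      generalize avec G v i = q
      generalize (if i = u then (1 : ZMod 2) else 0) = d
      revert p q d
      decide
    · by_cases hyv : y = v
      · simp only [hyv] at hyS ⊢
        have hmem : v ∈ symmDiff S ({u, v} : Finset V) := by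
          simp [Finset.mem_symmDiff, hyS]
        simp only [if_neg hyS, if_pos hmem, if_pos (rfl : v = v),
          if_neg (hne : u ≠ v)]
        rw [adjM_avec]
        generalize avec G u i = p
        generalize avec G v i = q
        generalize (if i = v then (1 : ZMod 2) else 0) = d
        revert p q d
        decide
      · have hmem : ¬ y ∈ symmDiff S ({u, v} : Finset V) := by
          simp [Finset.mem_symmDiff, hyS, hyu, hyv]
        simp only [if_neg hyS, if_neg hmem,
          if_neg (fun hh => hyu hh.symm : ¬ u = y),
          if_neg (fun hh => hyv hh.symm : ¬ v = y)]
        generalize avec G u i = p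
        generalize avec G v i = q
        generalize (if i = y then (1 : ZMod 2) else 0) = d
        revert p q d
        decide

private lemma gdet_pivot (G : SimpleGraph V) {u v : V} (h : G.Adj u v) (S : Finset V) :
    gdet (G.pivot u v) S = gdet G (symmDiff S {u, v}) := by
  rw [gdet_colSel, gdet_colSel, ← K_mul_colSel G h S, Matrix.det_mul, det_Kmat G h, one_mul]

private lemma pivotSupport_nil : pivotSupport ([] : List (V × V)) = ∅ := by
  simp [pivotSupport]

private lemma pivotSupport_cons (u v : V) (huv : u ≠ v) (φ : List (V × V)) :
    pivotSupport ((u, v) :: φ) = symmDiff ({u, v} : Finset V) (pivotSupport φ) := by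
  ext z
  simp only [pivotSupport, Finset.mem_filter, Finset.mem_univ, true_and,
    Finset.mem_symmDiff, Finset.mem_insert, Finset.mem_singleton,
    List.flatMap_cons, List.count_append, List.count_cons, List.count_nil,
    beq_iff_eq, Nat.odd_iff]
  by_cases hzu : u = z
  · subst hzu
    have hvu : ¬ v = u := fun hh => huv hh.symm
    simp [hvu, huv]
    omega
  · by_cases hzv : v = z
    · subst hzv
      have hzu' : ¬ v = u := fun hh => hzu hh.symm
      simp [hzu, hzu']
      omega
    · have h1 : ¬ z = u := fun hh => hzu hh.symm
      have h2 : ¬ z = v := fun hh => hzv hh.symm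
      simp [hzu, hzv, h1, h2]
private lemma gdet_applyPivots_aux :
    ∀ (φ : List (V × V)) (G : SimpleGraph V), PivotsApplicable G φ → ∀ T : Finset V,
      gdet (applyPivots G φ) T = gdet G (symmDiff (pivotSupport φ) T)
  | [], G, _, T => by
    simp only [applyPivots, pivotSupport_nil, ← Finset.bot_eq_empty, bot_symmDiff]
  | (u, v) :: ψ, G, ⟨h1, h2⟩, T => by
    have step : applyPivots G ((u, v) :: ψ) = applyPivots (G.pivot u v) ψ := rfl
    rw [step, gdet_applyPivots_aux ψ (G.pivot u v) h2 T, gdet_pivot G h1,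
      pivotSupport_cons u v h1.ne ψ]
    congr 1
    rw [symmDiff_right_comm, symmDiff_comm (pivotSupport ψ) ({u, v} : Finset V)]

end Aux

/-- If `φ` is applicable to `G` with support `S` and `x ≠ y`, then
`det((Gφ)[{x,y}]) = det(G[S ⊕ {x,y}])`; consequently `{x,y} ∈ E(Gφ)` iff this value is `1`. -/
theorem gdet_applyPivots (G : SimpleGraph V) (φ : List (V × V)) (h : PivotsApplicable G φ)
    (x y : V) (hxy : x ≠ y) :
    gdet (applyPivots G φ) {x, y} = gdet G (symmDiff (pivotSupport φ) {x, y}) ∧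
      ((applyPivots G φ).Adj x y ↔ gdet G (symmDiff (pivotSupport φ) {x, y}) = 1) := by
  have h1 : gdet (applyPivots G φ) {x, y} = gdet G (symmDiff (pivotSupport φ) {x, y}) :=
    gdet_applyPivots_aux φ G h {x, y}
  refine ⟨h1, ?_⟩
  rw [← h1, gdet_pair _ x y hxy]
  by_cases hA : (applyPivots G φ).Adj x y
  · simp [hA]
  · simp only [hA, if_false, false_iff]
    decide
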